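/- arXiv:2206.09334 — 3 statements merged into one kernel-verified Lean document; each statement's English description precedes it below -/
import Mathlib

section
/- Let n = 2ℓ+1 and suppose X, Y ⊆ 2^[n] with A ∪ B = [n] a partition, |A| = ℓ. Suppose every X ∈ X\2^A has at most (2/3)|Y| neighbors in the bipartite disjointness graph between X and Y, and that the number of disjoint pairs (X,Y) ∈ X×Y is at least (2−2ε)·2^{2ℓ} while |X|·|Y| ≤ (9/4)·2^{2ℓ}. Then |X ∩ 2^A| ≥ (2/3 − 8ε/3)|X|. -/
open Finset
open scoped Classical

/-- The counting argument of Claim 3: if every `X ∈ 𝒳 \ 2^A` has at most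
`(2/3)|𝒴|` neighbors in the bipartite disjointness graph, the number of
disjoint pairs is at least `(2−2ε)2^{2ℓ}` and `|𝒳||𝒴| ≤ (9/4)2^{2ℓ}`, then
`|𝒳 ∩ 2^A| ≥ (2/3 − 8ε/3)|𝒳|`. -/
theorem X_mostly_in_cube (ℓ : ℕ) (ε : ℝ)
    (𝒳 𝒴 : Finset (Finset (Fin (2 * ℓ + 1))))
    (A B : Finset (Fin (2 * ℓ + 1)))
    (hAB : A ∪ B = Finset.univ) (hdisj : Disjoint A B) (hA : A.card = ℓ)
    (hnb : ∀ X ∈ 𝒳, ¬ X ⊆ A →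
      ((𝒴.filter (fun Y => Disjoint X Y)).card : ℝ) ≤ (2 / 3) * 𝒴.card)
    (he : (((𝒳 ×ˢ 𝒴).filter (fun p => Disjoint p.1 p.2)).card : ℝ) ≥
      (2 - 2 * ε) * 2 ^ (2 * ℓ))
    (hXY : ((𝒳.card : ℝ) * 𝒴.card) ≤ (9 / 4) * 2 ^ (2 * ℓ)) :
    (((𝒳.filter (fun X => X ⊆ A)).card : ℝ)) ≥ (2 / 3 - 8 * ε / 3) * 𝒳.card := by
  have hsum : ((𝒳 ×ˢ 𝒴).filter (fun p => Disjoint p.1 p.2)).card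
      = ∑ x ∈ 𝒳, (𝒴.filter (fun y => Disjoint x y)).card := by
    rw [Finset.card_filter, Finset.sum_product]
    exact Finset.sum_congr rfl fun x _ => (Finset.card_filter _ _).symm
  -- split the sum
  have hsplit : (∑ x ∈ 𝒳, ((𝒴.filter (fun y => Disjoint x y)).card : ℝ))
      = (∑ x ∈ 𝒳.filter (fun X => X ⊆ A), ((𝒴.filter (fun y => Disjoint x y)).card : ℝ))
      + (∑ x ∈ 𝒳.filter (fun X => ¬ X ⊆ A), ((𝒴.filter (fun y => Disjoint x y)).card : ℝ)) :=
    (Finset.sum_filter_add_sum_filter_not _ _ _).symm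
  have h1 : (∑ x ∈ 𝒳.filter (fun X => X ⊆ A), ((𝒴.filter (fun y => Disjoint x y)).card : ℝ))
      ≤ ((𝒳.filter (fun X => X ⊆ A)).card : ℝ) * 𝒴.card := by
    calc (∑ x ∈ 𝒳.filter (fun X => X ⊆ A), ((𝒴.filter (fun y => Disjoint x y)).card : ℝ))
        ≤ ∑ _x ∈ 𝒳.filter (fun X => X ⊆ A), (𝒴.card : ℝ) := by
          apply Finset.sum_le_sum
          intro i _
          exact_mod_cast Finset.card_filter_le _ _
      _ = ((𝒳.filter (fun X => X ⊆ A)).card : ℝ) * 𝒴.card := by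
          rw [Finset.sum_const, nsmul_eq_mul]
  have h2 : (∑ x ∈ 𝒳.filter (fun X => ¬ X ⊆ A), ((𝒴.filter (fun y => Disjoint x y)).card : ℝ))
      ≤ ((𝒳.filter (fun X => ¬ X ⊆ A)).card : ℝ) * ((2/3) * 𝒴.card) := by
    calc (∑ x ∈ 𝒳.filter (fun X => ¬ X ⊆ A), ((𝒴.filter (fun y => Disjoint x y)).card : ℝ))
        ≤ ∑ _x ∈ 𝒳.filter (fun X => ¬ X ⊆ A), ((2/3) * (𝒴.card : ℝ)) := by
          apply Finset.sum_le_sum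
          intro i hi
          rw [Finset.mem_filter] at hi
          exact hnb i hi.1 hi.2
      _ = ((𝒳.filter (fun X => ¬ X ⊆ A)).card : ℝ) * ((2/3) * 𝒴.card) := by
          rw [Finset.sum_const, nsmul_eq_mul]
  have hcards : ((𝒳.filter (fun X => X ⊆ A)).card : ℝ)
      + ((𝒳.filter (fun X => ¬ X ⊆ A)).card : ℝ) = (𝒳.card : ℝ) := by
    exact_mod_cast Finset.card_filter_add_card_filter_not (p := fun X => X ⊆ A)
  set T : ℝ := ((𝒳.filter (fun X => X ⊆ A)).card : ℝ) with hT
  set S : ℝ := ((𝒳.filter (fun X => ¬ X ⊆ A)).card : ℝ)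
  have hE : (2 - 2 * ε) * 2 ^ (2 * ℓ) ≤ T * 𝒴.card + S * ((2/3) * 𝒴.card) := by
    rw [hsum] at he
    push_cast at he
    linarith [he, h1, h2, hsplit]
  have hP : (0:ℝ) < 2 ^ (2 * ℓ) := by positivity
  have hTnn : (0:ℝ) ≤ T := Nat.cast_nonneg _
  by_cases hc : (2/3 - 8 * ε / 3 : ℝ) ≤ 0
  · have : (2/3 - 8 * ε / 3 : ℝ) * 𝒳.card ≤ 0 :=
      mul_nonpos_of_nonpos_of_nonneg hc (Nat.cast_nonneg _)
    linarith
  · push_neg at hc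
    have hYnn : (0:ℝ) ≤ (𝒴.card : ℝ) := Nat.cast_nonneg _
    rcases eq_or_lt_of_le hYnn with hY0 | hYpos
    · exfalso
      have : T * (𝒴.card : ℝ) + S * ((2/3) * 𝒴.card) = 0 := by rw [← hY0]; ring
      nlinarith
    · -- T * Y ≥ c * X * Y, divide by Y
      have key : (2/3 - 8 * ε / 3) * (𝒳.card : ℝ) * 𝒴.card ≤ T * 𝒴.card := by
        have hXS : S = (𝒳.card : ℝ) - T := by linarith
        have h3 : (2/3 - 8 * ε / 3) * ((𝒳.card : ℝ) * 𝒴.card)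
            ≤ (2/3 - 8 * ε / 3) * ((9/4) * 2 ^ (2 * ℓ)) :=
          mul_le_mul_of_nonneg_left hXY (le_of_lt hc)
        nlinarith
      exact le_of_mul_le_mul_right key hYpos
end

section
/- Let n = 2ℓ+1, let S ⊆ [n] with |S| = ℓ, and let F be a maximal 3-wise intersecting family on [n] with complement family G (closed downwards, ∅ ∈ G, S ∉ G, Sᶜ ∉ G). Set G₁ = {A ∈ G : ∅ ⊊ A ⊊ S}, G₂ = {B ∈ G : ∅ ⊊ B ⊊ Sᶜ}, G₃ = G\(2^S ∪ 2^{Sᶜ}), and suppose |G △ (2^S ∪ 2^{Sᶜ})| ≤ ε·2^ℓ. Then the number of subsets of [n] lying in neither F nor 2^S ∪ 2^{Sᶜ} is at most |G₁|·|G₂| + |G₃|·ε·2^ℓ. -/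
open Finset
open scoped Classical symmDiff

/-- `F` is `k`-wise intersecting. -/
def kWiseIntersecting (n k : ℕ) (F : Finset (Finset (Fin n))) : Prop :=
  ∀ G ⊆ F, G.card = k → ∃ x : Fin n, ∀ A ∈ G, x ∈ A

/-- `F` is maximal `k`-wise intersecting. -/
def MaximalKWiseIntersecting (n k : ℕ) (F : Finset (Finset (Fin n))) : Prop :=
  kWiseIntersecting n k F ∧
    ∀ A : Finset (Fin n), A ∉ F → ¬ kWiseIntersecting n k (insert A F)

/-- The counting claim of Section 3: the number of sets in neither `F` nor
`F₀ = 2^S ∪ 2^{Sᶜ}` is at most `|G₁||G₂| + |G₃|·ε·2^ℓ`. -/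
theorem counting_claim (ℓ : ℕ) (S : Finset (Fin (2 * ℓ + 1))) (hS : S.card = ℓ)
    (F : Finset (Finset (Fin (2 * ℓ + 1))))
    (hF : MaximalKWiseIntersecting (2 * ℓ + 1) 3 F) (ε : ℝ)
    (G : Finset (Finset (Fin (2 * ℓ + 1)))) (hG : G = F.image (fun B => Bᶜ))
    (hdown : ∀ A ∈ G, ∀ A', A' ⊆ A → A' ∈ G) (hempty : ∅ ∈ G)
    (hSnot : S ∉ G) (hScnot : Sᶜ ∉ G)
    (hsym : (((G ∆ (S.powerset ∪ Sᶜ.powerset)).card : ℝ)) ≤ ε * 2 ^ ℓ) :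
    ((Finset.univ.filter
        (fun A : Finset (Fin (2 * ℓ + 1)) =>
          A ∉ F ∧ A ∉ S.powerset ∪ Sᶜ.powerset)).card : ℝ) ≤
      ((G.filter (fun A => ∅ ⊂ A ∧ A ⊂ S)).card : ℝ) *
          ((G.filter (fun B => ∅ ⊂ B ∧ B ⊂ Sᶜ)).card : ℝ) +
        (((G \ (S.powerset ∪ Sᶜ.powerset)).card : ℝ)) * ε * 2 ^ ℓ := by
  set F₀ : Finset (Finset (Fin (2 * ℓ + 1))) := S.powerset ∪ Sᶜ.powerset with hF₀def
  set G₁ := G.filter (fun A => ∅ ⊂ A ∧ A ⊂ S) with hG₁def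
  set G₂ := G.filter (fun B => ∅ ⊂ B ∧ B ⊂ Sᶜ) with hG₂def
  set Bad := Finset.univ.filter
      (fun A : Finset (Fin (2 * ℓ + 1)) => A ∉ F ∧ A ∉ F₀) with hBaddef
  set T := G₁ ×ˢ G₂ ∪ (G \ F₀) ×ˢ (G ∆ F₀) with hTdef
  -- complements of members of F belong to G
  have hGF : ∀ X ∈ F, Xᶜ ∈ G := by
    intro X hX
    rw [hG]
    exact Finset.mem_image_of_mem _ hX
  -- every set not in F is a union of two members of G
  have hdecomp : ∀ A : Finset (Fin (2 * ℓ + 1)), A ∉ F →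
      ∃ B, B ∈ G ∧ ∃ C, C ∈ G ∧ B ∪ C = A := by
    intro A hA
    have hnk := hF.2 A hA
    rw [kWiseIntersecting] at hnk
    push_neg at hnk
    obtain ⟨H, hHsub, hH3, hno⟩ := hnk
    have hAH : A ∈ H := by
      by_contra hAH
      have hHF : H ⊆ F := by
        intro X hX
        rcases Finset.mem_insert.mp (hHsub hX) with h | h
        · exact absurd (h ▸ hX) hAH
        · exact h
      obtain ⟨x, hx⟩ := hF.1 H hHF hH3
      obtain ⟨A', hA'H, hxA'⟩ := hno x
      exact hxA' (hx A' hA'H)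
    have hcard2 : (H.erase A).card = 2 := by
      rw [Finset.card_erase_of_mem hAH, hH3]
    obtain ⟨X, Y, hXY, hXYeq⟩ := Finset.card_eq_two.mp hcard2
    have hXe : X ∈ H.erase A := by rw [hXYeq]; exact Finset.mem_insert_self _ _
    have hYe : Y ∈ H.erase A := by
      rw [hXYeq]; exact Finset.mem_insert.mpr (Or.inr (Finset.mem_singleton_self _))
    have hXF : X ∈ F := by
      rcases Finset.mem_insert.mp (hHsub (Finset.mem_of_mem_erase hXe)) with h | h
      · exact absurd h (Finset.ne_of_mem_erase hXe)
      · exact h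
    have hYF : Y ∈ F := by
      rcases Finset.mem_insert.mp (hHsub (Finset.mem_of_mem_erase hYe)) with h | h
      · exact absurd h (Finset.ne_of_mem_erase hYe)
      · exact h
    refine ⟨Xᶜ ∩ A, hdown Xᶜ (hGF X hXF) _ Finset.inter_subset_left,
      Yᶜ ∩ A, hdown Yᶜ (hGF Y hYF) _ Finset.inter_subset_left, ?_⟩
    ext x
    simp only [Finset.mem_union, Finset.mem_inter, Finset.mem_compl]
    constructor
    · rintro (⟨_, h⟩ | ⟨_, h⟩) <;> exact h
    · intro hxA
      obtain ⟨A', hA'H, hxn⟩ := hno x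
      have hA'cases : A' = A ∨ A' = X ∨ A' = Y := by
        rcases eq_or_ne A' A with h | h
        · exact Or.inl h
        · right
          have hmem : A' ∈ H.erase A := Finset.mem_erase.mpr ⟨h, hA'H⟩
          rw [hXYeq] at hmem
          simpa using hmem
      rcases hA'cases with rfl | rfl | rfl
      · exact absurd hxA hxn
      · exact Or.inl ⟨hxn, hxA⟩
      · exact Or.inr ⟨hxn, hxA⟩
  -- key: every bad set is the union of a pair from T
  have key : ∀ A ∈ Bad,
      ∃ p : Finset (Fin (2 * ℓ + 1)) × Finset (Fin (2 * ℓ + 1)),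
        p ∈ T ∧ p.1 ∪ p.2 = A := by
    intro A hA
    rw [hBaddef, Finset.mem_filter] at hA
    obtain ⟨-, hAF, hAF₀⟩ := hA
    have hAS : ¬ A ⊆ S := fun h =>
      hAF₀ (Finset.mem_union_left _ (Finset.mem_powerset.mpr h))
    have hASc : ¬ A ⊆ Sᶜ := fun h =>
      hAF₀ (Finset.mem_union_right _ (Finset.mem_powerset.mpr h))
    by_cases hi : A ∩ S ∈ G ∧ A ∩ Sᶜ ∈ G
    · refine ⟨(A ∩ S, A ∩ Sᶜ), Finset.mem_union_left _ ?_, ?_⟩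
      · rw [Finset.mem_product]
        constructor
        · rw [hG₁def, Finset.mem_filter]
          refine ⟨hi.1, ?_, ?_⟩
          · rw [Finset.empty_ssubset]
            obtain ⟨x, hxA, hxS⟩ := Finset.not_subset.mp hASc
            rw [Finset.mem_compl, not_not] at hxS
            exact ⟨x, Finset.mem_inter.mpr ⟨hxA, hxS⟩⟩
          · exact Finset.ssubset_iff_subset_ne.mpr
              ⟨Finset.inter_subset_right, fun h => hSnot (h ▸ hi.1)⟩
        · rw [hG₂def, Finset.mem_filter]
          refine ⟨hi.2, ?_, ?_⟩
          · rw [Finset.empty_ssubset]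
            obtain ⟨x, hxA, hxS⟩ := Finset.not_subset.mp hAS
            exact ⟨x, Finset.mem_inter.mpr ⟨hxA, Finset.mem_compl.mpr hxS⟩⟩
          · exact Finset.ssubset_iff_subset_ne.mpr
              ⟨Finset.inter_subset_right, fun h => hScnot (h ▸ hi.2)⟩
      · show A ∩ S ∪ A ∩ Sᶜ = A
        rw [← Finset.inter_union_distrib_left, Finset.union_compl, Finset.inter_univ]
    · obtain ⟨B, hBG, C, hCG, hBC⟩ := hdecomp A hAF
      -- the step when B' is "mixed"
      have step : ∀ B' C' : Finset (Fin (2 * ℓ + 1)), B' ∈ G → C' ∈ G →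
          B' ∪ C' = A → ¬ B' ⊆ S → ¬ B' ⊆ Sᶜ →
          ∃ p : Finset (Fin (2 * ℓ + 1)) × Finset (Fin (2 * ℓ + 1)),
            p ∈ T ∧ p.1 ∪ p.2 = A := by
        intro B' C' hB'G hC'G hBC' hB'S hB'Sc
        have hB'F₀ : B' ∈ G \ F₀ := by
          refine Finset.mem_sdiff.mpr ⟨hB'G, fun h => ?_⟩
          rcases Finset.mem_union.mp h with h | h
          · exact hB'S (Finset.mem_powerset.mp h)
          · exact hB'Sc (Finset.mem_powerset.mp h)
        by_cases hC'S : C' ⊆ S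
        · -- partner becomes A ∩ S ∈ F₀ \ G
          have hintc : A ∩ Sᶜ ⊆ B' := by
            intro x hx
            rw [Finset.mem_inter] at hx
            have hxA := hx.1
            rw [← hBC'] at hxA
            rcases Finset.mem_union.mp hxA with h | h
            · exact h
            · exact absurd (hC'S h) (Finset.mem_compl.mp hx.2)
          have hAScG : A ∩ Sᶜ ∈ G := hdown B' hB'G _ hintc
          have hASnG : A ∩ S ∉ G := fun h => hi ⟨h, hAScG⟩
          refine ⟨(B', A ∩ S), Finset.mem_union_right _
            (Finset.mem_product.mpr ⟨hB'F₀, ?_⟩), ?_⟩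
          · rw [Finset.mem_symmDiff]
            exact Or.inr ⟨Finset.mem_union_left _
              (Finset.mem_powerset.mpr Finset.inter_subset_right), hASnG⟩
          · show B' ∪ A ∩ S = A
            apply Finset.Subset.antisymm
            · refine Finset.union_subset ?_ Finset.inter_subset_left
              rw [← hBC']; exact Finset.subset_union_left
            · intro x hx
              by_cases hxS : x ∈ S
              · exact Finset.mem_union_right _ (Finset.mem_inter.mpr ⟨hx, hxS⟩)
              · exact Finset.mem_union_left _
                  (hintc (Finset.mem_inter.mpr ⟨hx, Finset.mem_compl.mpr hxS⟩))
        · by_cases hC'Sc : C' ⊆ Sᶜ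
          · -- partner becomes A ∩ Sᶜ ∈ F₀ \ G
            have hintc : A ∩ S ⊆ B' := by
              intro x hx
              rw [Finset.mem_inter] at hx
              have hxA := hx.1
              rw [← hBC'] at hxA
              rcases Finset.mem_union.mp hxA with h | h
              · exact h
              · exact absurd hx.2 (Finset.mem_compl.mp (hC'Sc h))
            have hASG : A ∩ S ∈ G := hdown B' hB'G _ hintc
            have hAScnG : A ∩ Sᶜ ∉ G := fun h => hi ⟨hASG, h⟩
            refine ⟨(B', A ∩ Sᶜ), Finset.mem_union_right _
              (Finset.mem_product.mpr ⟨hB'F₀, ?_⟩), ?_⟩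
            · rw [Finset.mem_symmDiff]
              exact Or.inr ⟨Finset.mem_union_right _
                (Finset.mem_powerset.mpr Finset.inter_subset_right), hAScnG⟩
            · show B' ∪ A ∩ Sᶜ = A
              apply Finset.Subset.antisymm
              · refine Finset.union_subset ?_ Finset.inter_subset_left
                rw [← hBC']; exact Finset.subset_union_left
              · intro x hx
                by_cases hxS : x ∈ S
                · exact Finset.mem_union_left _
                    (hintc (Finset.mem_inter.mpr ⟨hx, hxS⟩))
                · exact Finset.mem_union_right _
                    (Finset.mem_inter.mpr ⟨hx, Finset.mem_compl.mpr hxS⟩)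
          · -- both mixed
            have hC'F₀ : C' ∈ G ∆ F₀ := by
              rw [Finset.mem_symmDiff]
              refine Or.inl ⟨hC'G, fun h => ?_⟩
              rcases Finset.mem_union.mp h with h | h
              · exact hC'S (Finset.mem_powerset.mp h)
              · exact hC'Sc (Finset.mem_powerset.mp h)
            exact ⟨(B', C'), Finset.mem_union_right _
              (Finset.mem_product.mpr ⟨hB'F₀, hC'F₀⟩), hBC'⟩
      by_cases hBS : B ⊆ S
      · by_cases hCS : C ⊆ S
        · exact absurd (by rw [← hBC]; exact Finset.union_subset hBS hCS) hAS
        · by_cases hCSc : C ⊆ Sᶜ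
          · -- B ⊆ S, C ⊆ Sᶜ : then A∩S = B, A∩Sᶜ = C, contradicting hi
            exfalso
            apply hi
            have h1 : A ∩ S = B := by
              ext x
              simp only [Finset.mem_inter]
              constructor
              · rintro ⟨hxA, hxS⟩
                rw [← hBC] at hxA
                rcases Finset.mem_union.mp hxA with h | h
                · exact h
                · exact absurd hxS (Finset.mem_compl.mp (hCSc h))
              · intro hxB
                exact ⟨by rw [← hBC]; exact Finset.mem_union_left _ hxB, hBS hxB⟩
            have h2 : A ∩ Sᶜ = C := by
              ext x
              simp only [Finset.mem_inter]
              constructor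
              · rintro ⟨hxA, hxS⟩
                rw [← hBC] at hxA
                rcases Finset.mem_union.mp hxA with h | h
                · exact absurd (hBS h) (Finset.mem_compl.mp hxS)
                · exact h
              · intro hxC
                refine ⟨by rw [← hBC]; exact Finset.mem_union_right _ hxC, hCSc hxC⟩
            rw [h1, h2]
            exact ⟨hBG, hCG⟩
          · exact step C B hCG hBG (by rw [Finset.union_comm]; exact hBC) hCS hCSc
      · by_cases hBSc : B ⊆ Sᶜ
        · by_cases hCS : C ⊆ S
          · -- B ⊆ Sᶜ, C ⊆ S : then A∩S = C, A∩Sᶜ = B, contradicting hi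
            exfalso
            apply hi
            have h1 : A ∩ S = C := by
              ext x
              simp only [Finset.mem_inter]
              constructor
              · rintro ⟨hxA, hxS⟩
                rw [← hBC] at hxA
                rcases Finset.mem_union.mp hxA with h | h
                · exact absurd hxS (Finset.mem_compl.mp (hBSc h))
                · exact h
              · intro hxC
                exact ⟨by rw [← hBC]; exact Finset.mem_union_right _ hxC, hCS hxC⟩
            have h2 : A ∩ Sᶜ = B := by
              ext x
              simp only [Finset.mem_inter]
              constructor
              · rintro ⟨hxA, hxS⟩
                rw [← hBC] at hxA
                rcases Finset.mem_union.mp hxA with h | h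
                · exact h
                · exact absurd (hCS h) (Finset.mem_compl.mp hxS)
              · intro hxB
                exact ⟨by rw [← hBC]; exact Finset.mem_union_left _ hxB, hBSc hxB⟩
            rw [h1, h2]
            exact ⟨hCG, hBG⟩
          · by_cases hCSc : C ⊆ Sᶜ
            · exact absurd (by rw [← hBC]; exact Finset.union_subset hBSc hCSc) hASc
            · exact step C B hCG hBG (by rw [Finset.union_comm]; exact hBC) hCS hCSc
        · exact step B C hBG hCG hBC hBS hBSc
  -- build the injection and count
  have hcard : Bad.card ≤ T.card := by
    have hchoice : ∀ A : Finset (Fin (2 * ℓ + 1)),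
        ∃ p : Finset (Fin (2 * ℓ + 1)) × Finset (Fin (2 * ℓ + 1)),
          A ∈ Bad → p ∈ T ∧ p.1 ∪ p.2 = A := by
      intro A
      by_cases hA : A ∈ Bad
      · obtain ⟨p, hp⟩ := key A hA
        exact ⟨p, fun _ => hp⟩
      · exact ⟨(∅, ∅), fun h => absurd h hA⟩
    choose f hf using hchoice
    apply Finset.card_le_card_of_injOn f
    · intro A hA
      exact (hf A hA).1
    · intro A hA A' hA' hff
      have h1 := (hf A hA).2
      have h2 := (hf A' hA').2
      rw [← h1, ← h2, hff]
  have hT : T.card ≤ G₁.card * G₂.card + (G \ F₀).card * (G ∆ F₀).card := by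
    calc T.card ≤ (G₁ ×ˢ G₂).card + ((G \ F₀) ×ˢ (G ∆ F₀)).card :=
          Finset.card_union_le _ _
      _ = G₁.card * G₂.card + (G \ F₀).card * (G ∆ F₀).card := by
          rw [Finset.card_product, Finset.card_product]
  have h1 : (Bad.card : ℝ) ≤ (G₁.card : ℝ) * (G₂.card : ℝ) +
      ((G \ F₀).card : ℝ) * ((G ∆ F₀).card : ℝ) := by
    have := hcard.trans hT
    exact_mod_cast this
  have h2 : ((G \ F₀).card : ℝ) * ((G ∆ F₀).card : ℝ) ≤
      ((G \ F₀).card : ℝ) * ε * 2 ^ ℓ := by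
    rw [mul_assoc]
    exact mul_le_mul_of_nonneg_left hsym (Nat.cast_nonneg _)
  linarith
end

section
/- Let n = 2ℓ+1 and let X, Y ⊆ 2^[n] with [n] = A ∪ B a partition, |A| = ℓ, |B| = ℓ+1. Suppose |X ∩ 2^A| ≤ 2^ℓ, |X| ≤ (3/2 + η)2^ℓ and |Y| = (3/2 − η)2^ℓ for some η ≥ 0 with η ≤ 3/2, and that every X ∈ X\2^A is disjoint from at most (2/3)|Y| members of Y. If the number of disjoint pairs in X × Y is at least (2 − 2ε)·2^{2ℓ}, then 2 − 2ε ≤ 2 − η/3 − 2η²/3, and hence η ≤ 6ε. -/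
open Finset
open scoped Classical
set_option maxHeartbeats 1000000 in
/-- The estimate establishing the refined bounds `α ≤ 3/2 + 6ε`,
`β ≥ 3/2 − 6ε` in Section 2. -/
theorem eta_bound (ℓ : ℕ) (ε η : ℝ) (hη0 : 0 ≤ η) (hη1 : η ≤ 3 / 2)
    (𝒳 𝒴 : Finset (Finset (Fin (2 * ℓ + 1))))
    (A B : Finset (Fin (2 * ℓ + 1)))
    (hAB : A ∪ B = Finset.univ) (hdisjAB : Disjoint A B)
    (hA : A.card = ℓ) (hB : B.card = ℓ + 1)
    (hXA : ((𝒳.filter (fun X => X ⊆ A)).card : ℝ) ≤ 2 ^ ℓ)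
    (hX : (𝒳.card : ℝ) ≤ (3 / 2 + η) * 2 ^ ℓ)
    (hY : (𝒴.card : ℝ) = (3 / 2 - η) * 2 ^ ℓ)
    (hnb : ∀ X ∈ 𝒳, ¬ X ⊆ A →
      ((𝒴.filter (fun Y => Disjoint X Y)).card : ℝ) ≤ (2 / 3) * 𝒴.card)
    (he : (((𝒳 ×ˢ 𝒴).filter (fun p => Disjoint p.1 p.2)).card : ℝ) ≥
      (2 - 2 * ε) * 2 ^ (2 * ℓ)) :
    2 - 2 * ε ≤ 2 - η / 3 - 2 * η ^ 2 / 3 ∧ η ≤ 6 * ε := by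
  have key : ((𝒳 ×ˢ 𝒴).filter (fun p => Disjoint p.1 p.2)).card
      = ∑ x ∈ 𝒳, (𝒴.filter (fun y => Disjoint x y)).card := by
    simp only [Finset.card_filter, Finset.sum_product]
  have hsplit : (((𝒳 ×ˢ 𝒴).filter (fun p => Disjoint p.1 p.2)).card : ℝ)
      = ∑ x ∈ 𝒳.filter (fun X => X ⊆ A), ((𝒴.filter (fun y => Disjoint x y)).card : ℝ)
      + ∑ x ∈ 𝒳.filter (fun X => ¬ X ⊆ A), ((𝒴.filter (fun y => Disjoint x y)).card : ℝ) := by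
    rw [key]; push_cast
    exact (Finset.sum_filter_add_sum_filter_not 𝒳 _ _).symm
  have h1 : ∑ x ∈ 𝒳.filter (fun X => X ⊆ A), ((𝒴.filter (fun y => Disjoint x y)).card : ℝ)
      ≤ ((𝒳.filter (fun X => X ⊆ A)).card : ℝ) * 𝒴.card := by
    calc ∑ x ∈ 𝒳.filter (fun X => X ⊆ A), ((𝒴.filter (fun y => Disjoint x y)).card : ℝ)
        ≤ ∑ _x ∈ 𝒳.filter (fun X => X ⊆ A), (𝒴.card : ℝ) :=
          Finset.sum_le_sum fun x _ => by exact_mod_cast Finset.card_filter_le _ _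
      _ = _ := by rw [Finset.sum_const, nsmul_eq_mul]
  have h2 : ∑ x ∈ 𝒳.filter (fun X => ¬ X ⊆ A), ((𝒴.filter (fun y => Disjoint x y)).card : ℝ)
      ≤ ((𝒳.filter (fun X => ¬ X ⊆ A)).card : ℝ) * (2 / 3 * 𝒴.card) := by
    calc ∑ x ∈ 𝒳.filter (fun X => ¬ X ⊆ A), ((𝒴.filter (fun y => Disjoint x y)).card : ℝ)
        ≤ ∑ _x ∈ 𝒳.filter (fun X => ¬ X ⊆ A), (2 / 3 * (𝒴.card : ℝ)) :=
          Finset.sum_le_sum fun x hx => by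
            rw [Finset.mem_filter] at hx; exact hnb x hx.1 hx.2
      _ = _ := by rw [Finset.sum_const, nsmul_eq_mul]
  have hcards : ((𝒳.filter (fun X => X ⊆ A)).card : ℝ)
      + ((𝒳.filter (fun X => ¬ X ⊆ A)).card : ℝ) = (𝒳.card : ℝ) := by
    exact_mod_cast Finset.card_filter_add_card_filter_not (s := 𝒳)
      (p := fun X => X ⊆ A)
  have hp : (2:ℝ) ^ (2 * ℓ) = 2 ^ ℓ * 2 ^ ℓ := by rw [two_mul, pow_add]
  have hpow : (0:ℝ) < 2 ^ ℓ := by positivity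
  have hXAnn : (0:ℝ) ≤ ((𝒳.filter (fun X => X ⊆ A)).card : ℝ) := Nat.cast_nonneg _
  have hqnn : (0:ℝ) ≤ (3 / 2 - η) * 2 ^ ℓ := by nlinarith
  have hXn : ((𝒳.filter (fun X => ¬ X ⊆ A)).card : ℝ)
      = (𝒳.card : ℝ) - ((𝒳.filter (fun X => X ⊆ A)).card : ℝ) := by linarith
  have e4 : ((𝒳.filter (fun X => X ⊆ A)).card : ℝ) * ((3 / 2 - η) * 2 ^ ℓ)
      ≤ 2 ^ ℓ * ((3 / 2 - η) * 2 ^ ℓ) := mul_le_mul_of_nonneg_right hXA hqnn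
  have e5 : ((𝒳.card : ℝ)) * ((3 / 2 - η) * 2 ^ ℓ)
      ≤ (3 / 2 + η) * 2 ^ ℓ * ((3 / 2 - η) * 2 ^ ℓ) := mul_le_mul_of_nonneg_right hX hqnn
  have hmain : (2 - 2 * ε) * (2 ^ ℓ * 2 ^ ℓ)
      ≤ (2 - η / 3 - 2 * η ^ 2 / 3) * (2 ^ ℓ * 2 ^ ℓ) := by
    rw [hY] at h1 h2
    rw [hXn] at h2
    have hpe : (2:ℝ) ^ (2 * ℓ) = 2 ^ ℓ * 2 ^ ℓ := by rw [two_mul, pow_add]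
    rw [hpe] at he
    nlinarith [he, hsplit, h1, h2, e4, e5]
  have hpp : (0:ℝ) < 2 ^ ℓ * 2 ^ ℓ := by positivity
  have h3 : 2 - 2 * ε ≤ 2 - η / 3 - 2 * η ^ 2 / 3 :=
    le_of_mul_le_mul_right (by linarith [hmain]) hpp
  refine ⟨h3, ?_⟩
  nlinarith [h3, sq_nonneg η]
end
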